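/- arXiv:1808.00189 — 3 statements merged into one kernel-verified Lean document; each statement's English description precedes it below -/
import Mathlib

section
/- If Ψ_j = ∅ for all j (full cooperation / CoMP), then the maximum integer J for which there exist nonempty pairwise disjoint subsets Λ_1,...,Λ_J of a set of size N_2 satisfying |Ψ_j| + Σ_{i≠j}|Λ_i| < M for all j equals min(M, N_2). -/
theorem dof_comp (M N₂ : ℕ) :
    IsGreatest {J : ℕ | ∃ Λ : Fin J → Finset (Fin N₂),
      (∀ j, (Λ j).Nonempty) ∧
      (∀ i j, i ≠ j → Disjoint (Λ i) (Λ j)) ∧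
      (∀ j, 0 + ∑ i ∈ Finset.univ \ {j}, (Λ i).card < M)}
      (min M N₂) := by
  constructor
  · -- membership
    refine ⟨fun j => {⟨j.1, lt_of_lt_of_le j.2 (min_le_right M N₂)⟩}, ?_, ?_, ?_⟩
    · intro j; exact Finset.singleton_nonempty _
    · intro i j hij
      simp only [Finset.disjoint_singleton_left, Finset.mem_singleton]
      intro h
      exact hij (Fin.ext (by simpa using congrArg Fin.val h))
    · intro j
      have hj : (0 : ℕ) < min M N₂ := lt_of_le_of_lt (Nat.zero_le _) j.2
      have hM : (0 : ℕ) < M := lt_of_lt_of_le hj (min_le_left _ _)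
      have : ∑ i ∈ Finset.univ \ {j}, ({(⟨i.1, lt_of_lt_of_le i.2 (min_le_right M N₂)⟩ : Fin N₂)} : Finset (Fin N₂)).card
          = (Finset.univ \ {j}).card := by
        simp
      rw [this]
      have hcard : (Finset.univ \ ({j} : Finset (Fin (min M N₂)))).card = min M N₂ - 1 := by
        rw [Finset.card_sdiff_of_subset (by simp)]
        simp
      rw [hcard]
      have := Nat.min_le_left M N₂
      omega
  · -- upper bound
    rintro J ⟨Λ, hne, hdisj, hsum⟩
    have hN : J ≤ N₂ := by
      have h1 : ∀ j : Fin J, 1 ≤ (Λ j).card := fun j => Finset.card_pos.mpr (hne j)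
      have hb : ∑ j : Fin J, (Λ j).card ≤ (Finset.univ : Finset (Fin N₂)).card := by
        rw [← Finset.card_biUnion (fun i _ j _ h => hdisj i j h)]
        exact Finset.card_le_card (Finset.subset_univ _)
      have : J ≤ ∑ j : Fin J, (Λ j).card := by
        calc J = ∑ _j : Fin J, 1 := by simp
        _ ≤ ∑ j : Fin J, (Λ j).card := Finset.sum_le_sum (fun j _ => h1 j)
      simpa using this.trans hb
    have hMle : J ≤ M := by
      rcases Nat.eq_zero_or_pos J with h0 | hpos
      · omega
      · set j : Fin J := ⟨0, hpos⟩
        have hs := hsum j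
        have hlow : J - 1 ≤ ∑ i ∈ Finset.univ \ {j}, (Λ i).card := by
          have : (Finset.univ \ ({j} : Finset (Fin J))).card = J - 1 := by
            rw [Finset.card_sdiff_of_subset (by simp)]; simp
          calc J - 1 = ∑ _i ∈ Finset.univ \ {j}, 1 := by rw [Finset.sum_const, this]; simp
          _ ≤ _ := Finset.sum_le_sum (fun i _ => Finset.card_pos.mpr (hne i))
        omega
    exact le_min hMle hN
end

section
/- If Ψ_j = N_1 for all j (no backhaul cooperation), i.e., every Ψ_j is a fixed set of size N_1 disjoint from the available set, then the maximum integer J for which there exist nonempty pairwise disjoint subsets Λ_1,...,Λ_J of a set of size N_2 satisfying |Ψ_j| + Σ_{i≠j}|Λ_i| < M for all j equals min(max(M − N_1, 0), N_2). -/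
theorem dof_no_cooperation (M N₁ N₂ : ℕ) :
    IsGreatest {J : ℕ | ∃ Λ : Fin J → Finset (Fin N₂),
      (∀ j, (Λ j).Nonempty) ∧
      (∀ i j, i ≠ j → Disjoint (Λ i) (Λ j)) ∧
      (∀ j, N₁ + ∑ i ∈ Finset.univ \ {j}, (Λ i).card < M)}
      (min (M - N₁) N₂) := by
  set K := min (M - N₁) N₂ with hK
  have hK1 : K ≤ M - N₁ := min_le_left _ _
  have hK2 : K ≤ N₂ := min_le_right _ _
  constructor
  · refine ⟨fun j => {⟨j.1, lt_of_lt_of_le j.2 hK2⟩}, fun j => Finset.singleton_nonempty _, ?_, ?_⟩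
    · intro i j hij
      rw [Finset.disjoint_singleton]
      simp only [ne_eq, Fin.mk.injEq]
      exact fun h => hij (Fin.ext h)
    · intro j
      have hsum : ∑ i ∈ Finset.univ \ {j},
          (({⟨i.1, lt_of_lt_of_le i.2 hK2⟩} : Finset (Fin N₂))).card = K - 1 := by
        simp [Finset.card_sdiff_of_subset, Finset.card_univ]
      rw [hsum]
      have hKpos : 0 < K := j.pos
      omega
  · rintro J ⟨Λ, hne, hdisj, hlt⟩
    have hcard : ∀ i, 1 ≤ (Λ i).card := fun i => Finset.card_pos.mpr (hne i)
    have hJN2 : J ≤ N₂ := by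
      have hbU : (Finset.univ.biUnion Λ).card = ∑ i, (Λ i).card :=
        Finset.card_biUnion (fun i _ j _ hij => hdisj i j hij)
      have h1 : J ≤ ∑ i, (Λ i).card := by
        calc J = ∑ _i : Fin J, 1 := by simp
        _ ≤ ∑ i, (Λ i).card := Finset.sum_le_sum (fun i _ => hcard i)
      have h2 : (Finset.univ.biUnion Λ).card ≤ N₂ := by
        simpa using Finset.card_le_card (Finset.subset_univ (Finset.univ.biUnion Λ))
      omega
    rcases Nat.eq_zero_or_pos J with h0 | hpos
    · omega
    · have j0 : Fin J := ⟨0, hpos⟩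
      have hlt0 := hlt j0
      have hsumge : J - 1 ≤ ∑ i ∈ Finset.univ \ {j0}, (Λ i).card := by
        calc J - 1 = ∑ _i ∈ Finset.univ \ {j0}, 1 := by
              simp [Finset.card_sdiff_of_subset, Finset.card_univ]
        _ ≤ _ := Finset.sum_le_sum (fun i _ => hcard i)
      omega
end

section
/- For nonempty pairwise disjoint finite sets Λ_1,...,Λ_J and finite sets Ψ_1,...,Ψ_J, the conditions |Ψ_j| + Σ_{i≠j}|Λ_i| < M for all j = 1,...,J imply J ≤ min(M, Σ_j |Λ_j|); in particular the achievable DoF J is at most min(M, N_2) when ⋃_j Λ_j is contained in a set of size N_2. -/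
theorem dof_upper_bound (M N₂ J : ℕ) (hM : 1 ≤ M)
    (Λ : Fin J → Finset (Fin N₂))
    (Ψ : Fin J → Finset ℕ)
    (hΛne : ∀ j, (Λ j).Nonempty)
    (hΛdisj : ∀ i j, i ≠ j → Disjoint (Λ i) (Λ j))
    (hcond : ∀ j, (Ψ j).card + ∑ i ∈ Finset.univ \ {j}, (Λ i).card < M) :
    J ≤ min M (∑ j, (Λ j).card) ∧ J ≤ min M N₂ := by
  have hsum : J ≤ ∑ j, (Λ j).card := by
    calc J = ∑ _j : Fin J, 1 := by simp
    _ ≤ ∑ j, (Λ j).card := Finset.sum_le_sum fun j _ =>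
        Finset.card_pos.mpr (hΛne j)
  have hN : (∑ j, (Λ j).card) ≤ N₂ := by
    have := Finset.card_biUnion (s := (Finset.univ : Finset (Fin J))) (t := Λ)
      (fun i _ j _ h => hΛdisj i j h)
    calc ∑ j, (Λ j).card = (Finset.univ.biUnion Λ).card := this.symm
    _ ≤ Fintype.card (Fin N₂) := Finset.card_le_univ _
    _ = N₂ := Fintype.card_fin _
  have hJM : J ≤ M := by
    rcases Nat.eq_zero_or_pos J with h0 | hpos
    · omega
    · have j : Fin J := ⟨0, hpos⟩
      have h1 : J - 1 ≤ ∑ i ∈ Finset.univ \ {j}, (Λ i).card := by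
        calc J - 1 = ∑ _i ∈ Finset.univ \ {j}, 1 := by
              simp [Finset.card_sdiff_of_subset, Finset.card_univ]
        _ ≤ _ := Finset.sum_le_sum fun i _ => Finset.card_pos.mpr (hΛne i)
      have := hcond j
      omega
  exact ⟨le_min hJM hsum, le_min hJM (hsum.trans hN)⟩
end
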